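/- arXiv:2008.08443 — 5 statements merged into one kernel-verified Lean document; each statement's English description precedes it below -/
import Mathlib

section
/- Let S and T be commutative rings, π : S → T and ι : T → S ring homomorphisms with π ∘ ι = id, and F : T → T a ring endomorphism. For x ∈ S define x^T := ι(π(x)), x^⊥ := x − x^T, and x^F := ι(F(π(x))). Define a new multiplication on S by x * y := x^T y^T + x^F y^⊥ + x^⊥ y^F + x^⊥ y^⊥. Then (S, +, *) is a commutative ring with the same unit 1, and π and ι are ring homomorphisms with respect to this new multiplication. -/
/-- Twisting the multiplication of `S` along `F : T → T`, via a splitting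
`π : S → T`, `ι : T → S` with `π ∘ ι = id`, yields a commutative ring with the
same addition and unit, and `π`, `ι` remain ring homomorphisms. -/
theorem stmt0 {S T : Type*} [CommRing S] [CommRing T]
    (π : S →+* T) (ι : T →+* S) (hπι : ∀ t, π (ι t) = t) (F : T →+* T) :
    let tT : S → S := fun x => ι (π x)
    let perp : S → S := fun x => x - tT x
    let fF : S → S := fun x => ι (F (π x))
    let mul : S → S → S := fun x y =>
      tT x * tT y + fF x * perp y + perp x * fF y + perp x * perp y
    (∀ x y, mul x y = mul y x) ∧
    (∀ x y z, mul (mul x y) z = mul x (mul y z)) ∧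
    (∀ x y z, mul x (y + z) = mul x y + mul x z) ∧
    (∀ x, mul 1 x = x) ∧
    (∀ x y, π (mul x y) = π x * π y) ∧
    (∀ a b, mul (ι a) (ι b) = ι (a * b)) := by
  intro tT perp fF mul
  refine ⟨?_, ?_, ?_, ?_, ?_, ?_⟩
  · intro x y; simp only [mul]; ring
  · intro x y z
    simp only [mul, perp, fF, tT, map_add, map_sub, map_mul, hπι]
    ring
  · intro x y z
    simp only [mul, perp, fF, tT, map_add, map_sub, map_mul, hπι]
    ring
  · intro x
    simp only [mul, perp, fF, tT, map_one]
    ring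
  · intro x y
    simp only [mul, perp, fF, tT, map_add, map_sub, map_mul, hπι]
    ring
  · intro a b
    simp only [mul, perp, fF, tT, map_add, map_sub, map_mul, hπι]
    ring
end

section
/- In the twisted-ring setting, suppose additionally there is a bijection F̃ : ker(π) → ker(π) that is additive, multiplicative, and satisfies F̃(ι(a)·b) = ι(F(a))·F̃(b) for all a ∈ T and b ∈ ker(π). Then the map x ↦ x^T + F̃(x^⊥) is a ring isomorphism from the original ring (S, +, ·) to the twisted ring (S, +, *), and this isomorphism commutes with ι and π. -/
/-- Given additionally a bijection `Ft` of `ker π` which is additive, multiplicative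
and semilinear over `F`, the map `x ↦ x^T + Ft (x^⊥)` is a ring isomorphism from the
original ring `S` to the twisted ring, commuting with `ι` and `π`. -/
theorem stmt1 {S T : Type*} [CommRing S] [CommRing T]
    (π : S →+* T) (ι : T →+* S) (hπι : ∀ t, π (ι t) = t) (F : T →+* T)
    (Ft : S → S)
    (hmem : ∀ x, π x = 0 → π (Ft x) = 0)
    (hinj : ∀ x y, π x = 0 → π y = 0 → Ft x = Ft y → x = y)
    (hsurj : ∀ y, π y = 0 → ∃ x, π x = 0 ∧ Ft x = y)
    (hFadd : ∀ x y, π x = 0 → π y = 0 → Ft (x + y) = Ft x + Ft y)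
    (hFmul : ∀ x y, π x = 0 → π y = 0 → Ft (x * y) = Ft x * Ft y)
    (hFsemi : ∀ (a : T) (b : S), π b = 0 → Ft (ι a * b) = ι (F a) * Ft b) :
    let tT : S → S := fun x => ι (π x)
    let perp : S → S := fun x => x - tT x
    let fF : S → S := fun x => ι (F (π x))
    let tmul : S → S → S := fun x y =>
      tT x * tT y + fF x * perp y + perp x * fF y + perp x * perp y
    let Φ : S → S := fun x => tT x + Ft (perp x)
    Function.Bijective Φ ∧
    (∀ x y, Φ (x + y) = Φ x + Φ y) ∧
    (∀ x y, Φ (x * y) = tmul (Φ x) (Φ y)) ∧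
    Φ 1 = 1 ∧
    (∀ a, Φ (ι a) = ι a) ∧
    (∀ x, π (Φ x) = π x) := by
  intro tT perp fF tmul Φ
  have hperp : ∀ x, π (perp x) = 0 := by
    intro x; simp [perp, tT, hπι]
  have hFt0 : Ft 0 = 0 := by
    have h2 : Ft 0 = Ft 0 + Ft 0 := by simpa using hFadd 0 0 (by simp) (by simp)
    exact left_eq_add.mp h2
  have hπΦ : ∀ x, π (Φ x) = π x := by
    intro x
    simp [Φ, hmem _ (hperp x), tT, hπι]
  have hperpΦ : ∀ x, perp (Φ x) = Ft (perp x) := by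
    intro x
    simp [perp, tT, hπΦ]
    show tT x + Ft (perp x) - ι (π x) = _
    simp [tT]
    rfl
  have htTΦ : ∀ x, tT (Φ x) = tT x := by
    intro x; simp [tT, hπΦ]
  have hadd : ∀ x y, Φ (x + y) = Φ x + Φ y := by
    intro x y
    have hp : perp (x + y) = perp x + perp y := by simp [perp, tT]; ring
    simp only [Φ, hp, hFadd _ _ (hperp x) (hperp y)]
    simp [tT]; ring
  refine ⟨⟨?_, ?_⟩, hadd, ?_, ?_, ?_, hπΦ⟩
  · -- injective
    intro x y h
    have hπ : π x = π y := by rw [← hπΦ x, ← hπΦ y, h]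
    have htT : tT x = tT y := by simp [tT, hπ]
    have hFtp : Ft (perp x) = Ft (perp y) := by
      have := h
      simp only [Φ, htT] at this
      exact add_left_cancel this
    have hp := hinj _ _ (hperp x) (hperp y) hFtp
    have : x = tT x + perp x := by simp [perp]
    rw [this, htT, hp]; simp [perp]
  · -- surjective
    intro z
    obtain ⟨b, hb0, hbF⟩ := hsurj (perp z) (hperp z)
    refine ⟨tT z + b, ?_⟩
    have h1 : π (tT z + b) = π z := by simp [tT, hπι, hb0]
    have h2 : perp (tT z + b) = b := by simp [perp, tT, h1]
    show tT (tT z + b) + Ft (perp (tT z + b)) = z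
    rw [h2, hbF]
    simp [tT, h1, perp]
  · -- multiplicative
    intro x y
    have hxy : x * y = tT x * tT y + (tT x * perp y + perp x * tT y + perp x * perp y) := by
      simp [perp]; ring
    have hπxy : π (x * y) = π x * π y := by simp
    have htTxy : tT (x * y) = tT x * tT y := by simp [tT]
    have hpxy : perp (x * y) = tT x * perp y + perp x * tT y + perp x * perp y := by
      simp [perp, htTxy]
      show x * y - tT x * tT y = _
      rw [hxy]; ring
    have k1 : π (tT x * perp y) = 0 := by simp [hperp]
    have k2 : π (perp x * tT y) = 0 := by simp [hperp]
    have k3 : π (perp x * perp y) = 0 := by simp [hperp]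
    have e1 : Ft (tT x * perp y) = ι (F (π x)) * Ft (perp y) := hFsemi (π x) _ (hperp y)
    have e2 : Ft (perp x * tT y) = ι (F (π y)) * Ft (perp x) := by
      rw [mul_comm]; exact hFsemi (π y) _ (hperp x)
    have e3 : Ft (perp x * perp y) = Ft (perp x) * Ft (perp y) :=
      hFmul _ _ (hperp x) (hperp y)
    show tT (x * y) + Ft (perp (x * y)) = tmul (Φ x) (Φ y)
    rw [htTxy, hpxy, hFadd _ _ (by simp [k1, k2] : π (tT x * perp y + perp x * tT y) = 0) k3,
      hFadd _ _ k1 k2, e1, e2, e3]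
    show _ = tT (Φ x) * tT (Φ y) + fF (Φ x) * perp (Φ y) + perp (Φ x) * fF (Φ y)
      + perp (Φ x) * perp (Φ y)
    rw [htTΦ, htTΦ, hperpΦ, hperpΦ]
    have hfF : ∀ x, fF (Φ x) = ι (F (π x)) := by intro x; simp [fF, hπΦ]
    rw [hfF, hfF]
    ring
  · -- Φ 1 = 1
    show tT 1 + Ft (perp 1) = 1
    have : perp 1 = 0 := by simp [perp, tT]
    simp [this, hFt0, tT]
  · -- Φ (ι a) = ι a
    intro a
    show tT (ι a) + Ft (perp (ι a)) = ι a
    have : perp (ι a) = 0 := by simp [perp, tT, hπι]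
    simp [this, hFt0, tT, hπι]
end

section
/- Let K ⊆ L be fields of characteristic p with L = K(t^{1/p}) for some t ∈ K, where t^{1/p} ∉ K. Let ∂ be a derivation of Frobenius on K (additive, ∂(xy) = x^p∂y + y^p∂x) with ∂(t) = 0. Then ∂ extends uniquely to a derivation of Frobenius on L by setting ∂(t^{1/p}) = 0 on the new generator; more precisely, there exists a derivation of Frobenius ∂_L on L restricting to ∂ on K. -/
open Polynomial

/-- A derivation of Frobenius on `K` with `d t = 0` extends to `L = K(t^{1/p})`
by sending the new generator to `0`. -/
theorem stmt15 {K L : Type*} [Field K] [Field L] (p : ℕ) [Fact p.Prime]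
    [CharP K p] [CharP L p] [Algebra K L]
    (t : K) (s : L) (hs : s ^ p = algebraMap K L t)
    (hnotp : ∀ u : K, u ^ p ≠ t)
    (hgen : Algebra.adjoin K {s} = ⊤)
    (d : K → K) (hadd : ∀ x y, d (x + y) = d x + d y)
    (hleib : ∀ x y, d (x * y) = x ^ p * d y + y ^ p * d x)
    (ht : d t = 0) :
    ∃ D : L → L, (∀ x y, D (x + y) = D x + D y) ∧
      (∀ x y, D (x * y) = x ^ p * D y + y ^ p * D x) ∧
      (∀ a : K, D (algebraMap K L a) = algebraMap K L (d a)) ∧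
      D s = 0 := by
  have hp : p.Prime := Fact.out
  have hppos : 0 < p := hp.pos
  -- basic facts about `d`
  have hd0 : d 0 = 0 := by
    have h := hadd 0 0
    rw [add_zero] at h
    exact (left_eq_add.mp h)
  have hd1 : d 1 = 0 := by
    have h := hleib 1 1
    simp only [one_pow, one_mul, mul_one] at h
    exact (left_eq_add.mp h)
  -- minimal polynomial
  have hmonic : (X ^ p - C t).Monic := monic_X_pow_sub_C t hp.ne_zero
  have haeval : (Polynomial.aeval s) (X ^ p - C t) = 0 := by
    simp [hs]
  have hirr : Irreducible (X ^ p - C t) := X_pow_sub_C_irreducible_of_prime hp hnotp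
  have hint : IsIntegral K s := ⟨X ^ p - C t, hmonic, haeval⟩
  have hmin : minpoly K s = X ^ p - C t :=
    (minpoly.eq_of_irreducible_of_monic hirr haeval hmonic).symm
  -- power basis
  let pb : PowerBasis K L := (Algebra.adjoin.powerBasis hint).map
    ((Subalgebra.equivOfEq _ _ hgen).trans Subalgebra.topEquiv)
  have hdim : pb.dim = p := by
    simp [pb, hmin]
  have hpbgen : pb.gen = s := by simp [pb]
  have hbasis : ∀ i : Fin pb.dim, pb.basis i = s ^ (i : ℕ) := by
    intro i; rw [pb.basis_eq_pow, hpbgen]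
  -- the candidate map
  set r : L → (Fin pb.dim →₀ K) := fun x => pb.basis.repr x with hr
  set D : L → L := fun x =>
    ∑ i : Fin pb.dim, algebraMap K L (d (r x i)) * s ^ (p * (i : ℕ)) with hD
  -- additivity
  have hDadd : ∀ x y, D (x + y) = D x + D y := by
    intro x y
    simp only [hD, hr, map_add, Finsupp.add_apply, hadd, map_add, add_mul,
      Finset.sum_add_distrib]
  have hDzero : D 0 = 0 := by
    simp [hD, hr, hd0]
  -- key computation
  have hkey : ∀ (a : K) (i : ℕ), D (algebraMap K L a * s ^ i)
      = algebraMap K L (d a) * s ^ (p * i) := by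
    intro a i
    induction i using Nat.strong_induction_on generalizing a with
    | _ i IH =>
      by_cases h : i < p
      · have hi : i < pb.dim := by omega
        have hx : algebraMap K L a * s ^ i = a • pb.basis ⟨i, hi⟩ := by
          rw [hbasis, Algebra.smul_def]
        have hrepr : r (algebraMap K L a * s ^ i) = Finsupp.single ⟨i, hi⟩ a := by
          rw [hx, hr]
          show pb.basis.repr (a • pb.basis ⟨i, hi⟩) = _
          rw [map_smul, Module.Basis.repr_self, Finsupp.smul_single, smul_eq_mul, mul_one]
        rw [hD]
        simp only [hrepr]
        rw [Finset.sum_eq_single (⟨i, hi⟩ : Fin pb.dim)]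
        · simp
        · intro j _ hj
          rw [Finsupp.single_eq_of_ne' (Ne.symm hj), hd0]
          simp
        · intro hmem; exact absurd (Finset.mem_univ _) hmem
      · push_neg at h
        have hx : algebraMap K L a * s ^ i = algebraMap K L (a * t) * s ^ (i - p) := by
          rw [map_mul]
          have : s ^ i = s ^ (i - p) * s ^ p := by
            rw [← pow_add]; congr 1; omega
          rw [this, hs]; ring
        rw [hx, IH (i - p) (by omega)]
        have hdat : d (a * t) = t ^ p * d a := by
          rw [hleib, ht, mul_zero, zero_add]
        rw [hdat, map_mul, map_pow, ← hs, ← pow_mul]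
        have hexp : p * i = p * p + p * (i - p) := by
          rw [← Nat.mul_add]
          congr 1
          omega
        rw [hexp, pow_add]
        ring
  -- consequences
  have hDalg : ∀ a : K, D (algebraMap K L a) = algebraMap K L (d a) := by
    intro a
    have := hkey a 0
    simpa using this
  have hDs : D s = 0 := by
    have := hkey 1 1
    simpa [hd1] using this
  -- Leibniz rule
  have hDsum : ∀ {ι : Type} (u : Finset ι) (f : ι → L),
      D (∑ i ∈ u, f i) = ∑ i ∈ u, D (f i) := by
    intro ι u f
    exact map_sum (AddMonoidHom.mk' D hDadd) f u
  refine ⟨D, hDadd, ?_, hDalg, hDs⟩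
  intro x y
  set a : Fin pb.dim → K := fun i => r x i with ha
  set b : Fin pb.dim → K := fun j => r y j with hb
  have hxrep : x = ∑ i : Fin pb.dim, algebraMap K L (a i) * s ^ (i : ℕ) := by
    conv_lhs => rw [← pb.basis.sum_repr x]
    refine Finset.sum_congr rfl fun i _ => ?_
    rw [hbasis, Algebra.smul_def]
  have hyrep : y = ∑ j : Fin pb.dim, algebraMap K L (b j) * s ^ (j : ℕ) := by
    conv_lhs => rw [← pb.basis.sum_repr y]
    refine Finset.sum_congr rfl fun j _ => ?_
    rw [hbasis, Algebra.smul_def]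
  have hxy : x * y = ∑ i : Fin pb.dim, ∑ j : Fin pb.dim,
      algebraMap K L (a i * b j) * s ^ ((i : ℕ) + (j : ℕ)) := by
    rw [hxrep, hyrep, Finset.sum_mul_sum]
    refine Finset.sum_congr rfl fun i _ => Finset.sum_congr rfl fun j _ => ?_
    rw [map_mul, pow_add]; ring
  have hDxy : D (x * y) = ∑ i : Fin pb.dim, ∑ j : Fin pb.dim,
      algebraMap K L (d (a i * b j)) * s ^ (p * ((i : ℕ) + (j : ℕ))) := by
    rw [hxy, hDsum]
    refine Finset.sum_congr rfl fun i _ => ?_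
    rw [hDsum]
    exact Finset.sum_congr rfl fun j _ => hkey _ _
  have hxp : x ^ p = ∑ i : Fin pb.dim, algebraMap K L (a i ^ p) * s ^ (p * (i : ℕ)) := by
    rw [hxrep, sum_pow_char]
    refine Finset.sum_congr rfl fun i _ => ?_
    rw [mul_pow, ← map_pow, ← pow_mul, Nat.mul_comm]
  have hyp : y ^ p = ∑ j : Fin pb.dim, algebraMap K L (b j ^ p) * s ^ (p * (j : ℕ)) := by
    rw [hyrep, sum_pow_char]
    refine Finset.sum_congr rfl fun j _ => ?_
    rw [mul_pow, ← map_pow, ← pow_mul, Nat.mul_comm]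
  have hDx : D x = ∑ i : Fin pb.dim, algebraMap K L (d (a i)) * s ^ (p * (i : ℕ)) := rfl
  have hDy : D y = ∑ j : Fin pb.dim, algebraMap K L (d (b j)) * s ^ (p * (j : ℕ)) := rfl
  have hterm1 : x ^ p * D y = ∑ i : Fin pb.dim, ∑ j : Fin pb.dim,
      algebraMap K L (a i ^ p) * s ^ (p * (i : ℕ))
        * (algebraMap K L (d (b j)) * s ^ (p * (j : ℕ))) := by
    rw [hxp, hDy, Finset.sum_mul_sum]
  have hterm2 : y ^ p * D x = ∑ i : Fin pb.dim, ∑ j : Fin pb.dim,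
      algebraMap K L (d (a i)) * s ^ (p * (i : ℕ))
        * (algebraMap K L (b j ^ p) * s ^ (p * (j : ℕ))) := by
    rw [mul_comm, hDx, hyp, Finset.sum_mul_sum]
  rw [hDxy, hterm1, hterm2, ← Finset.sum_add_distrib]
  refine Finset.sum_congr rfl fun i _ => ?_
  rw [← Finset.sum_add_distrib]
  refine Finset.sum_congr rfl fun j _ => ?_
  rw [hleib, map_add, map_mul, map_mul, map_pow, map_pow, Nat.mul_add, pow_add]
  ring
end

section
/- Let k ⊆ K be a field extension, and let D(R) := R × R with the Frobenius-twisted dual-number multiplication over characteristic p. For K-algebras R, the functor R ↦ D^∂(R) (where D(R) has the K-algebra structure given by a fixed derivation of Frobenius ∂ on K, a ↦ (a, ∂a) followed by the map D(K) → D(R)) admits a left adjoint τ^∂ : Alg_K → Alg_K. Concretely, for R = K[X]/I, τ^∂(R) = K[X₀, X₁]/Ī where Ī is generated by ∂₀(f), ∂₁(f) for f ∈ I and (∂₀, ∂₁) is the unique extension of ∂ to a homomorphism K[X] → D(K[X₀, X₁]) sending X to (X₀, X₁). -/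
/-- The data of a `K`-algebra homomorphism `R → D^d(T)` into the Frobenius-twisted
dual numbers `D(T) = T × T` of a `K`-algebra `T`, where the `K`-algebra structure
on `D(T)` comes from `a ↦ (a, d a)`: it is a pair of maps `(f, g)`. -/
def IsFrobDOpHom (p : ℕ) {K R T : Type} [Field K] [CommRing R] [CommRing T]
    [Algebra K R] [Algebra K T] (d : K → K) (f g : R → T) : Prop :=
  f 1 = 1 ∧ g 1 = 0 ∧
  (∀ x y, f (x + y) = f x + f y) ∧ (∀ x y, g (x + y) = g x + g y) ∧
  (∀ x y, f (x * y) = f x * f y) ∧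
  (∀ x y, g (x * y) = (f x) ^ p * g y + (f y) ^ p * g x) ∧
  (∀ a : K, f (algebraMap K R a) = algebraMap K T a) ∧
  (∀ a : K, g (algebraMap K R a) = algebraMap K T (d a))

/-- A candidate value of the prolongation functor `τ^d` at `R`:
a `K`-algebra together with a pair of maps `R → carrier`. -/
structure FrobProlongation (p : ℕ) (K : Type) [Field K] (d : K → K)
    (R : Type) [CommRing R] [Algebra K R] where
  carrier : Type
  [commRing : CommRing carrier]
  [algebra : Algebra K carrier]
  u₀ : R → carrier
  u₁ : R → carrier

attribute [instance] FrobProlongation.commRing FrobProlongation.algebra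


open MvPolynomial

def frobRels (p : ℕ) {K : Type} [Field K] (d : K → K) (R : Type) [CommRing R]
    [Algebra K R] : Set (MvPolynomial (R ⊕ R) K) :=
  { q | q = X (Sum.inl 1) - 1 ∨ q = X (Sum.inr 1) ∨
    (∃ x y : R, q = X (Sum.inl (x + y)) - (X (Sum.inl x) + X (Sum.inl y))) ∨
    (∃ x y : R, q = X (Sum.inr (x + y)) - (X (Sum.inr x) + X (Sum.inr y))) ∨
    (∃ x y : R, q = X (Sum.inl (x * y)) - X (Sum.inl x) * X (Sum.inl y)) ∨
    (∃ x y : R, q = X (Sum.inr (x * y)) -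
      ((X (Sum.inl x)) ^ p * X (Sum.inr y) + (X (Sum.inl y)) ^ p * X (Sum.inr x))) ∨
    (∃ a : K, q = X (Sum.inl (algebraMap K R a)) - C a) ∨
    (∃ a : K, q = X (Sum.inr (algebraMap K R a)) - C (d a)) }

noncomputable def frobIdeal (p : ℕ) {K : Type} [Field K] (d : K → K) (R : Type) [CommRing R]
    [Algebra K R] : Ideal (MvPolynomial (R ⊕ R) K) :=
  Ideal.span (frobRels p d R)

noncomputable def frobE (p : ℕ) {K : Type} [Field K] (d : K → K) (R : Type) [CommRing R]
    [Algebra K R] : FrobProlongation p K d R where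
  carrier := MvPolynomial (R ⊕ R) K ⧸ frobIdeal p d R
  u₀ := fun r => Ideal.Quotient.mk _ (X (Sum.inl r))
  u₁ := fun r => Ideal.Quotient.mk _ (X (Sum.inr r))
/-- The functor `T ↦ D^d(T)` admits a left adjoint `τ^d`, expressed through the
universal property: for every `K`-algebra `R` there is a `K`-algebra `τ^d(R)` with a
universal homomorphism `R → D^d(τ^d(R))`, inducing a natural bijection
`Hom_{Alg_K}(R, D^d(T)) ≅ Hom_{Alg_K}(τ^d(R), T)`. -/
theorem stmt16 (p : ℕ) [Fact p.Prime] {K : Type} [Field K] [CharP K p]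
    (d : K → K) (hadd : ∀ x y, d (x + y) = d x + d y)
    (hleib : ∀ x y, d (x * y) = x ^ p * d y + y ^ p * d x)
    (R : Type) [CommRing R] [Algebra K R] :
    ∃ E : FrobProlongation p K d R,
      IsFrobDOpHom p d E.u₀ E.u₁ ∧
      ∀ (T : Type) [CommRing T] [Algebra K T] (f g : R → T),
        IsFrobDOpHom p d f g →
        ∃! h : E.carrier →ₐ[K] T,
          (∀ r, f r = h (E.u₀ r)) ∧ ∀ r, g r = h (E.u₁ r) := by
  classical
  refine ⟨frobE p d R, ?_, ?_⟩
  · have mem : ∀ q ∈ frobRels p d R, (Ideal.Quotient.mk (frobIdeal p d R)) q = 0 :=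
      fun q hq => Ideal.Quotient.eq_zero_iff_mem.mpr (Ideal.subset_span hq)
    have key : ∀ q₁ q₂ : MvPolynomial (R ⊕ R) K, q₁ - q₂ ∈ frobRels p d R →
        (Ideal.Quotient.mk (frobIdeal p d R)) q₁ = (Ideal.Quotient.mk (frobIdeal p d R)) q₂ := by
      intro q₁ q₂ h
      have := mem _ h
      rw [map_sub, sub_eq_zero] at this
      exact this
    refine ⟨?_, ?_, ?_, ?_, ?_, ?_, ?_, ?_⟩
    · show (Ideal.Quotient.mk (frobIdeal p d R)) (X (Sum.inl (1:R))) = 1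
      rw [key (X (Sum.inl 1)) 1 (Or.inl rfl), map_one]
    · exact mem (X (Sum.inr 1)) (Or.inr (Or.inl rfl))
    · intro x y
      have := key _ _ (Or.inr (Or.inr (Or.inl ⟨x, y, rfl⟩)))
      simp only [map_add, map_mul, map_pow] at this
      exact this
    · intro x y
      have := key _ _ (Or.inr (Or.inr (Or.inr (Or.inl ⟨x, y, rfl⟩))))
      simp only [map_add, map_mul, map_pow] at this
      exact this
    · intro x y
      have := key _ _ (Or.inr (Or.inr (Or.inr (Or.inr (Or.inl ⟨x, y, rfl⟩)))))
      simp only [map_add, map_mul, map_pow] at this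
      exact this
    · intro x y
      have := key _ _ (Or.inr (Or.inr (Or.inr (Or.inr (Or.inr (Or.inl ⟨x, y, rfl⟩))))))
      simp only [map_add, map_mul, map_pow] at this
      exact this
    · intro a
      have := key _ _ (Or.inr (Or.inr (Or.inr (Or.inr (Or.inr (Or.inr (Or.inl ⟨a, rfl⟩)))))))
      exact this.trans (Ideal.Quotient.mk_algebraMap K _ a)
    · intro a
      have := key _ _ (Or.inr (Or.inr (Or.inr (Or.inr (Or.inr (Or.inr (Or.inr ⟨a, rfl⟩)))))))
      exact this.trans (Ideal.Quotient.mk_algebraMap K _ (d a))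
  · intro T _ _ f g hfg
    obtain ⟨h1, h2, h3, h4, h5, h6, h7, h8⟩ := hfg
    set φ : MvPolynomial (R ⊕ R) K →ₐ[K] T := aeval (Sum.elim f g) with hφ
    have hker : frobIdeal p d R ≤ RingHom.ker φ.toRingHom := by
      rw [frobIdeal, Ideal.span_le]
      rintro q (rfl | rfl | ⟨x, y, rfl⟩ | ⟨x, y, rfl⟩ | ⟨x, y, rfl⟩ | ⟨x, y, rfl⟩ |
        ⟨a, rfl⟩ | ⟨a, rfl⟩) <;>
        simp only [SetLike.mem_coe, RingHom.mem_ker, AlgHom.toRingHom_eq_coe,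
          RingHom.coe_coe, map_sub, map_add, map_mul, map_pow, map_one, hφ, aeval_X,
          Sum.elim_inl, Sum.elim_inr, sub_eq_zero, aeval_C]
      · exact h1
      · simpa using h2
      · exact h3 x y
      · exact h4 x y
      · exact h5 x y
      · exact h6 x y
      · simpa using h7 a
      · simpa using h8 a
    have hker' : ∀ q ∈ frobIdeal p d R, φ q = 0 := fun q hq => hker hq
    refine ⟨Ideal.Quotient.liftₐ (frobIdeal p d R) φ hker', ⟨?_, ?_⟩, ?_⟩
    · intro r
      simp [frobE, hφ]
      exact (aeval_X (Sum.elim f g) (Sum.inl r)).symm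
    · intro r
      simp [frobE, hφ]
      exact (aeval_X (Sum.elim f g) (Sum.inr r)).symm
    · rintro h' ⟨ha, hb⟩
      have hsurj := Ideal.Quotient.mkₐ_surjective K (frobIdeal p d R)
      have hcomp : h'.comp (Ideal.Quotient.mkₐ K (frobIdeal p d R)) =
          (Ideal.Quotient.liftₐ (frobIdeal p d R) φ hker').comp
            (Ideal.Quotient.mkₐ K (frobIdeal p d R)) := by
        apply MvPolynomial.algHom_ext
        rintro (r | r)
        · have hr : (Ideal.Quotient.liftₐ (frobIdeal p d R) φ hker')
              ((Ideal.Quotient.mk (frobIdeal p d R)) (X (Sum.inl r) : MvPolynomial (R ⊕ R) K))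
              = f r := by simp [hφ]; exact aeval_X (Sum.elim f g) _
          simp only [AlgHom.comp_apply, Ideal.Quotient.mkₐ_eq_mk, hr]
          exact (ha r).symm
        · have hr : (Ideal.Quotient.liftₐ (frobIdeal p d R) φ hker')
              ((Ideal.Quotient.mk (frobIdeal p d R)) (X (Sum.inr r) : MvPolynomial (R ⊕ R) K))
              = g r := by simp [hφ]; exact aeval_X (Sum.elim f g) _
          simp only [AlgHom.comp_apply, Ideal.Quotient.mkₐ_eq_mk, hr]
          exact (hb r).symm
      ext x
      obtain ⟨y, rfl⟩ := hsurj x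
      exact AlgHom.congr_fun hcomp y
end

section
/- Let L be a field of characteristic p, B a commutative ring with maps ι : L → B, π : B → L, π ∘ ι = id, such that b^p = 0 for all b ∈ ker(π). Let K ⊆ M ⊆ N be fields with N/M purely inseparable of exponent 1 (N^p ⊆ M), and let ∂ : M → B be a ring homomorphism into a ring of the above type over N (i.e., π : B → N, ι : N → B) such that π ∘ ∂ is the inclusion M ⊆ N and ∂(a) = ι(a) for all a ∈ N^p. Then ∂ extends to a ring homomorphism ∂_N : N → B with π ∘ ∂_N = id_N. -/
open Polynomial

/-- Extension of `B`-operators along a purely inseparable extension of exponent one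
whose `p`-th powers are constants. -/
theorem stmt19 {N Bb : Type*} [Field N] [CommRing Bb] (p : ℕ) [Fact p.Prime]
    [CharP N p]
    (ι : N →+* Bb) (π : Bb →+* N) (hπι : ∀ x, π (ι x) = x)
    (hker : ∀ b : Bb, π b = 0 → b ^ p = 0)
    (M : Subfield N) (hMp : ∀ x : N, x ^ p ∈ M)
    (d : M →+* Bb) (hd : ∀ m : M, π (d m) = (m : N))
    (hconst : ∀ x : N, d ⟨x ^ p, hMp x⟩ = ι (x ^ p)) :
    ∃ D : N →+* Bb, (∀ x : N, π (D x) = x) ∧ ∀ m : M, D (m : N) = d m := by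
  classical
  -- the "pullback" subring of pairs `(x, b)` with `π b = x`
  set P : Subring (N × Bb) :=
    RingHom.eqLocus (π.comp (RingHom.snd N Bb)) (RingHom.fst N Bb) with hP
  have hmemP : ∀ z : N × Bb, z ∈ P ↔ π z.2 = z.1 := fun z => Iff.rfl
  -- the collection of admissible "graphs"
  set S : Set (Subring (N × Bb)) :=
    {G | G ≤ P ∧ (∀ b : Bb, ((0 : N), b) ∈ G → b = 0) ∧ ∀ m : M, ((m : N), d m) ∈ G}
    with hSdef
  -- the graph of `d` is admissible
  have hG0 : (M.subtype.prod d).range ∈ S := by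
    refine ⟨?_, ?_, ?_⟩
    · rintro z ⟨m, rfl⟩
      exact hd m
    · rintro b ⟨m, hm⟩
      have h1 : (m : N) = 0 := congrArg Prod.fst hm
      have h2 : d m = b := congrArg Prod.snd hm
      have : m = 0 := Subtype.ext h1
      rw [← h2, this, map_zero]
    · intro m
      exact ⟨m, rfl⟩
  -- Zorn's lemma: a maximal admissible graph
  obtain ⟨G, -, hGmax⟩ := zorn_le_nonempty₀ S (fun c hcS hchain y hy => by
    refine ⟨sSup c, ⟨?_, ?_, ?_⟩, fun z hz => le_sSup hz⟩
    · exact sSup_le fun z hz => (hcS hz).1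
    · intro b hb
      obtain ⟨G', hG'c, hbG'⟩ :=
        (Subring.mem_sSup_of_directedOn ⟨y, hy⟩ hchain.directedOn).mp hb
      exact (hcS hG'c).2.1 b hbG'
    · intro m
      exact le_sSup hy ((hcS hy).2.2 m)) _ hG0
  have hGS : G ∈ S := hGmax.prop
  obtain ⟨hGP, hG2, hG3⟩ := hGS
  -- uniqueness of the second coordinate
  have huniq : ∀ (x : N) (b b' : Bb), (x, b) ∈ G → (x, b') ∈ G → b = b' := by
    intro x b b' h1 h2
    have h3 : ((0 : N), b - b') ∈ G := by
      have := G.sub_mem h1 h2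
      simpa using this
    have := hG2 _ h3
    linear_combination (norm := ring_nf) this
  -- extension principle coming from maximality
  have hext : ∀ t : N × Bb, t ∈ P →
      (∀ b : Bb, ((0 : N), b) ∈ Subring.closure (insert t (G : Set (N × Bb))) → b = 0) →
      t ∈ G := by
    intro t htP h0
    have hle : G ≤ Subring.closure (insert t (G : Set (N × Bb))) :=
      fun z hz => Subring.subset_closure (Set.mem_insert_of_mem _ hz)
    have hclS : Subring.closure (insert t (G : Set (N × Bb))) ∈ S := by
      refine ⟨Subring.closure_le.mpr ?_, h0, fun m => hle (hG3 m)⟩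
      exact Set.insert_subset htP hGP
    exact hGmax.2 hclS hle (Subring.subset_closure (Set.mem_insert _ _))
  -- closure under inverses
  have hinv : ∀ (x : N) (b : Bb), (x, b) ∈ G → x ≠ 0 → ∃ b', (x⁻¹, b') ∈ G := by
    intro x b hxb hx0
    have hπb : π b = x := hGP hxb
    have hu : IsUnit b := by
      have h1 : IsUnit (ι x) := (isUnit_iff_ne_zero.mpr hx0).map ι
      have hnil : IsNilpotent (b - ι x) :=
        ⟨p, hker _ (by rw [map_sub, hπb, hπι, sub_self])⟩
      have := hnil.isUnit_add_right_of_commute h1 (Commute.all _ _)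
      simpa using this
    obtain ⟨u, hu⟩ := hu
    have hub : (u : Bb) = b := hu
    have hπinv : π (↑u⁻¹ : Bb) = x⁻¹ := by
      have h2 : x * π (↑u⁻¹ : Bb) = 1 := by
        rw [← hπb, ← map_mul, ← hub, Units.mul_inv, map_one]
      exact (eq_inv_of_mul_eq_one_right h2).symm ▸ rfl
    refine ⟨(↑u⁻¹ : Bb), hext (x⁻¹, (↑u⁻¹ : Bb)) hπinv ?_⟩
    intro c hc
    -- every element of the closure becomes an element of `G` after multiplying
    -- by a power of `(x, b)`
    have key : ∀ z ∈ Subring.closure (insert (x⁻¹, (↑u⁻¹ : Bb)) (G : Set (N × Bb))),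
        ∃ n : ℕ, z * (x, b) ^ n ∈ G := by
      intro z hz
      have hstep : ∀ (w : N × Bb) (n m : ℕ), n ≤ m → w * (x, b) ^ n ∈ G →
          w * (x, b) ^ m ∈ G := by
        intro w n m hnm hw
        obtain ⟨k, rfl⟩ := Nat.exists_eq_add_of_le hnm
        rw [pow_add, ← mul_assoc]
        exact G.mul_mem hw (G.pow_mem hxb k)
      induction hz using Subring.closure_induction with
      | mem w hw =>
        rcases hw with hw | hw
        · subst hw
          refine ⟨1, ?_⟩
          have : ((x⁻¹ : N), (↑u⁻¹ : Bb)) * (x, b) = 1 := by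
            have h1 : x⁻¹ * x = 1 := inv_mul_cancel₀ hx0
            have h2 : (↑u⁻¹ : Bb) * b = 1 := by rw [← hub, Units.inv_mul]
            exact Prod.ext h1 h2
          rw [pow_one, this]
          exact G.one_mem
        · exact ⟨0, by simpa using hw⟩
      | zero => exact ⟨0, by simpa using G.zero_mem⟩
      | one => exact ⟨0, by simpa using G.one_mem⟩
      | add w₁ w₂ h₁ h₂ ih₁ ih₂ =>
        obtain ⟨n₁, hn₁⟩ := ih₁
        obtain ⟨n₂, hn₂⟩ := ih₂
        refine ⟨n₁ ⊔ n₂, ?_⟩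
        rw [add_mul]
        exact G.add_mem (hstep _ _ _ le_sup_left hn₁) (hstep _ _ _ le_sup_right hn₂)
      | neg w hw ih =>
        obtain ⟨n, hn⟩ := ih
        exact ⟨n, by rw [neg_mul]; exact G.neg_mem hn⟩
      | mul w₁ w₂ h₁ h₂ ih₁ ih₂ =>
        obtain ⟨n₁, hn₁⟩ := ih₁
        obtain ⟨n₂, hn₂⟩ := ih₂
        refine ⟨n₁ + n₂, ?_⟩
        rw [pow_add, mul_mul_mul_comm]
        exact G.mul_mem hn₁ hn₂
    obtain ⟨n, hn⟩ := key _ hc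
    have hxbn : ((x : N), b) ^ n = (x ^ n, b ^ n) := Prod.ext (by simp) (by simp)
    have h0n : ((0 : N), c * b ^ n) ∈ G := by
      have : ((0 : N), c) * (x, b) ^ n = ((0 : N), c * b ^ n) := by
        rw [hxbn]; exact Prod.ext (by simp) rfl
      rwa [this] at hn
    have hcbn : c * b ^ n = 0 := hG2 _ h0n
    have hbu : IsUnit (b ^ n) := IsUnit.pow n ⟨u, hub⟩
    exact (hbu.mul_left_eq_zero).mp hcbn
  -- the subfield of first coordinates
  let F : Subfield N :=
    { carrier := {y : N | ∃ b, (y, b) ∈ G}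
      zero_mem' := ⟨0, G.zero_mem⟩
      one_mem' := ⟨1, G.one_mem⟩
      add_mem' := fun {a a'} ha ha' => by
        obtain ⟨c, hc⟩ := ha
        obtain ⟨c', hc'⟩ := ha'
        exact ⟨c + c', G.add_mem hc hc'⟩
      mul_mem' := fun {a a'} ha ha' => by
        obtain ⟨c, hc⟩ := ha
        obtain ⟨c', hc'⟩ := ha'
        exact ⟨c * c', G.mul_mem hc hc'⟩
      neg_mem' := fun {a} ha => by
        obtain ⟨c, hc⟩ := ha
        exact ⟨-c, G.neg_mem hc⟩
      inv_mem' := by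
        intro y hy
        obtain ⟨c, hc⟩ := hy
        by_cases hy0 : y = 0
        · subst hy0
          exact ⟨0, by rw [inv_zero]; exact G.zero_mem⟩
        · exact hinv y c hc hy0 }
  have hmemF : ∀ y : N, y ∈ F ↔ ∃ b, (y, b) ∈ G := fun y => Iff.rfl
  -- the ring homomorphism `F →+* Bb` defined by the graph `G`
  have hch : ∀ y : ↥F, ((y : N), Classical.choose ((hmemF (y : N)).mp y.2)) ∈ G :=
    fun y => Classical.choose_spec ((hmemF (y : N)).mp y.2)
  let D' : ↥F →+* Bb :=
    { toFun := fun y => Classical.choose ((hmemF (y : N)).mp y.2)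
      map_one' := huniq 1 _ _ (hch 1) G.one_mem
      map_mul' := fun y z => huniq _ _ _ (hch (y * z)) (G.mul_mem (hch y) (hch z))
      map_zero' := huniq 0 _ _ (hch 0) G.zero_mem
      map_add' := fun y z => huniq _ _ _ (hch (y + z)) (G.add_mem (hch y) (hch z)) }
  have hD' : ∀ y : ↥F, ((y : N), D' y) ∈ G := hch
  have hπD' : ∀ y : ↥F, π (D' y) = (y : N) := fun y => hGP (hD' y)
  have hMF : ∀ m : M, (m : N) ∈ F := fun m => ⟨d m, hG3 m⟩
  have hD'M : ∀ m : M, D' ⟨(m : N), hMF m⟩ = d m :=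
    fun m => huniq _ _ _ (hD' ⟨(m : N), hMF m⟩) (hG3 m)
  -- every element of `N` is in `F`
  have hF : ∀ x : N, x ∈ F := by
    intro x
    by_contra hx
    set c : ↥F := ⟨x ^ p, hMF ⟨x ^ p, hMp x⟩⟩ with hc
    have hD'c : D' c = ι x ^ p := by
      rw [hc, hD'M ⟨x ^ p, hMp x⟩, hconst x, map_pow]
    have hpprime : p.Prime := Fact.out
    have hppos : p ≠ 0 := hpprime.ne_zero
    set q : Polynomial ↥F := X ^ p - C c with hq
    have hirr : Irreducible q := by
      refine X_pow_sub_C_irreducible_of_prime hpprime ?_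
      intro y hy
      apply hx
      have hyx : (y : N) ^ p = x ^ p := congrArg Subtype.val hy
      have hsub : ((y : N) - x) ^ p = 0 := by
        rw [sub_pow_char, hyx, sub_self]
      have : (y : N) - x = 0 := pow_eq_zero_iff hppos |>.mp hsub
      have hyx2 : (y : N) = x := sub_eq_zero.mp this
      exact hyx2 ▸ y.2
    haveI : Fact (Irreducible q) := ⟨hirr⟩
    have hQev : q.eval₂ F.subtype x = 0 := by
      simp [hq, hc]
    have hBev : q.eval₂ D' (ι x) = 0 := by
      simp [hq, hD'c]
    set Φ' : AdjoinRoot q →+* N := AdjoinRoot.lift F.subtype x hQev with hΦ'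
    set Φ : AdjoinRoot q →+* Bb := AdjoinRoot.lift D' (ι x) hBev with hΦ
    have hπΦ : ∀ z : AdjoinRoot q, π (Φ z) = Φ' z := by
      intro z
      induction z using AdjoinRoot.induction_on with
      | ih g =>
        rw [hΦ, hΦ', AdjoinRoot.lift_mk, AdjoinRoot.lift_mk, Polynomial.hom_eval₂, hπι]
        congr 1
        exact RingHom.ext hπD'
    set ψ : AdjoinRoot q →+* N × Bb := Φ'.prod Φ with hψ
    have hranS : ψ.range ∈ S := by
      refine ⟨?_, ?_, ?_⟩
      · rintro z ⟨w, rfl⟩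
        exact hπΦ w
      · rintro b ⟨w, hw⟩
        have h1 : Φ' w = 0 := congrArg Prod.fst hw
        have h2 : Φ w = b := congrArg Prod.snd hw
        have hinj : Function.Injective Φ' := Φ'.injective
        have : w = 0 := hinj (by rw [h1, map_zero])
        rw [← h2, this, map_zero]
      · intro m
        refine ⟨AdjoinRoot.of q ⟨(m : N), hMF m⟩, ?_⟩
        have h1 : Φ' (AdjoinRoot.of q ⟨(m : N), hMF m⟩) = (m : N) := by
          rw [hΦ']; exact AdjoinRoot.lift_of hQev
        have h2 : Φ (AdjoinRoot.of q ⟨(m : N), hMF m⟩) = d m := by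
          rw [hΦ]
          have := AdjoinRoot.lift_of (x := (⟨(m : N), hMF m⟩ : ↥F)) hBev
          rw [this, hD'M]
        exact Prod.ext h1 h2
    have hGψ : G ≤ ψ.range := by
      intro z hz
      have hz' : (z.1, z.2) ∈ G := by simpa using hz
      have h1 : z.1 ∈ F := ⟨z.2, hz'⟩
      have h2 : z.2 = D' ⟨z.1, h1⟩ := huniq _ _ _ hz' (hD' ⟨z.1, h1⟩)
      refine ⟨AdjoinRoot.of q ⟨z.1, h1⟩, ?_⟩
      have e1 : Φ' (AdjoinRoot.of q ⟨z.1, h1⟩) = z.1 := by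
        rw [hΦ']; exact AdjoinRoot.lift_of hQev
      have e2 : Φ (AdjoinRoot.of q ⟨z.1, h1⟩) = z.2 := by
        rw [hΦ]
        have := AdjoinRoot.lift_of (x := (⟨z.1, h1⟩ : ↥F)) hBev
        rw [this, ← h2]
      exact Prod.ext e1 e2
    have hsub : ψ.range ≤ G := hGmax.2 hranS hGψ
    have hroot : ψ (AdjoinRoot.root q) = (x, ι x) := by
      have e1 : Φ' (AdjoinRoot.root q) = x := by rw [hΦ']; exact AdjoinRoot.lift_root hQev
      have e2 : Φ (AdjoinRoot.root q) = ι x := by rw [hΦ]; exact AdjoinRoot.lift_root hBev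
      exact Prod.ext e1 e2
    have : (x, ι x) ∈ G := hsub ⟨AdjoinRoot.root q, hroot⟩
    exact hx ⟨ι x, this⟩
  -- assemble the final homomorphism
  refine ⟨{ toFun := fun x => D' ⟨x, hF x⟩
            map_one' := by
              show D' ⟨(1 : N), hF 1⟩ = 1
              rw [show (⟨(1 : N), hF 1⟩ : ↥F) = 1 from Subtype.ext rfl, D'.map_one]
            map_mul' := fun x y => by
              show D' ⟨x * y, hF (x * y)⟩ = D' ⟨x, hF x⟩ * D' ⟨y, hF y⟩
              rw [show (⟨x * y, hF (x * y)⟩ : ↥F) = ⟨x, hF x⟩ * ⟨y, hF y⟩ from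
                Subtype.ext rfl, D'.map_mul]
            map_zero' := by
              show D' ⟨(0 : N), hF 0⟩ = 0
              rw [show (⟨(0 : N), hF 0⟩ : ↥F) = 0 from Subtype.ext rfl, D'.map_zero]
            map_add' := fun x y => by
              show D' ⟨x + y, hF (x + y)⟩ = D' ⟨x, hF x⟩ + D' ⟨y, hF y⟩
              rw [show (⟨x + y, hF (x + y)⟩ : ↥F) = ⟨x, hF x⟩ + ⟨y, hF y⟩ from
                Subtype.ext rfl, D'.map_add] }, ?_, ?_⟩
  · intro x
    exact hπD' ⟨x, hF x⟩
  · intro m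
    exact huniq _ _ _ (hD' ⟨(m : N), hF (m : N)⟩) (hG3 m)
end
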